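/- Let (X, A, Y) be random with A ∈ {0,1} and Y ∈ L²(P), fix a ∈ {0,1}, let π(X) be a version of P(A=a | X) and μ a measurable function with E[1(A=a)Y | X] = μ(X)π(X) almost surely. Let π̂, μ̂ be measurable functions with ε ≤ π̂ ≤ 1 pointwise for some ε > 0 and with π, π̂, μ, μ̂ square-integrable. Then E[ 1(A=a)(Y − μ̂(X))/π̂(X) + μ̂(X) ] − E[μ(X)] = E[ ( (π(X) − π̂(X)) / π̂(X) ) · ( μ(X) − μ̂(X) ) ], and consequently | E[ 1(A=a)(Y − μ̂(X))/π̂(X) + μ̂(X) ] − E[μ(X)] | ≤ ε^{-1} ‖π̂ − π‖_{2,P} ‖μ̂ − μ‖_{2,P}. -/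

import Mathlib

open MeasureTheory ProbabilityTheory

noncomputable section

lemma tower_aux {Ω : Type*} [m0 : MeasurableSpace Ω] (P : Measure Ω) [IsProbabilityMeasure P]
    {m : MeasurableSpace Ω} (hm : m ≤ m0) (f g : Ω → ℝ)
    (hf : StronglyMeasurable[m] f) (hfg : Integrable (f * g) P) (hg : Integrable g P) :
    ∫ ω, f ω * g ω ∂P = ∫ ω, f ω * (P[g|m]) ω ∂P := by
  have h1 : ∫ ω, (P[f * g|m]) ω ∂P = ∫ ω, (f * g) ω ∂P := integral_condExp hm
  have h2 := integral_congr_ae (condExp_mul_of_stronglyMeasurable_left hf hfg hg)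
  simp only [Pi.mul_apply] at h1 h2 ⊢
  rw [← h1, h2]

lemma mulL2_int {Ω : Type*} [MeasurableSpace Ω] {P : Measure Ω}
    {u v : Ω → ℝ} (hu : MemLp u 2 P) (hv : MemLp v 2 P) :
    Integrable (fun ω => u ω * v ω) P := by
  have : MemLp (u • v) 1 P :=
    hv.smul (φ := u) hu (r := 1)
  exact (memLp_one_iff_integrable.mp this).congr (Filter.Eventually.of_forall fun ω => by
    simp [Pi.smul_apply, smul_eq_mul])


/-- the doubly-robust (second-order) bias expansion for the
uncentered efficient influence function of a counterfactual mean. -/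
theorem stmt14 {Ω 𝒳 : Type*} [MeasurableSpace Ω] [MeasurableSpace 𝒳]
    (P : Measure Ω) [IsProbabilityMeasure P]
    (X : Ω → 𝒳) (A : Ω → Bool) (Y : Ω → ℝ) (a : Bool)
    (hX : Measurable X) (hA : Measurable A) (hYm : Measurable Y) (hY : MemLp Y 2 P)
    (pt mt phat mhat : 𝒳 → ℝ)
    (hptm : Measurable pt) (hmtm : Measurable mt)
    (hphatm : Measurable phat) (hmhatm : Measurable mhat)
    (ε : ℝ) (hε : 0 < ε) (hphat : ∀ x, ε ≤ phat x ∧ phat x ≤ 1)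
    -- `pt (X ·)` is a version of `P(A = a | X)`
    (hpt : (fun ω => pt (X ω)) =ᵐ[P]
      P[fun ω => if A ω = a then (1 : ℝ) else 0 | MeasurableSpace.comap X inferInstance])
    -- `E[1(A=a) Y | X] = mt(X) pt(X)` a.s.
    (hmt : (fun ω => mt (X ω) * pt (X ω)) =ᵐ[P]
      P[fun ω => (if A ω = a then (1 : ℝ) else 0) * Y ω | MeasurableSpace.comap X inferInstance])
    -- square integrability of the nuisance functions
    (hptL2 : MemLp (fun ω => pt (X ω)) 2 P) (hphatL2 : MemLp (fun ω => phat (X ω)) 2 P)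
    (hmtL2 : MemLp (fun ω => mt (X ω)) 2 P) (hmhatL2 : MemLp (fun ω => mhat (X ω)) 2 P) :
    ((∫ ω, ((if A ω = a then (1 : ℝ) else 0) * (Y ω - mhat (X ω)) / phat (X ω) + mhat (X ω)) ∂P)
        - ∫ ω, mt (X ω) ∂P
      = ∫ ω, ((pt (X ω) - phat (X ω)) / phat (X ω)) * (mt (X ω) - mhat (X ω)) ∂P) ∧
    (|(∫ ω, ((if A ω = a then (1 : ℝ) else 0) * (Y ω - mhat (X ω)) / phat (X ω) + mhat (X ω)) ∂P)
        - ∫ ω, mt (X ω) ∂P|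
      ≤ ε⁻¹ * (Real.sqrt (∫ ω, (phat (X ω) - pt (X ω)) ^ 2 ∂P) *
          Real.sqrt (∫ ω, (mhat (X ω) - mt (X ω)) ^ 2 ∂P))) := by
  
  have hm : MeasurableSpace.comap X inferInstance ≤ (inferInstance : MeasurableSpace Ω) :=
    hX.comap_le
  haveI : SigmaFinite (P.trim hm) := by infer_instance
  have hXm : Measurable[MeasurableSpace.comap X inferInstance] X :=
    Measurable.of_comap_le le_rfl
  have hphatpos : ∀ x, 0 < phat x := fun x => lt_of_lt_of_le hε (hphat x).1
  have hinvle : ∀ x, (phat x)⁻¹ ≤ ε⁻¹ := fun x =>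
    inv_anti₀ hε (hphat x).1
  have hinvpos : ∀ x, 0 < (phat x)⁻¹ := fun x => inv_pos.mpr (hphatpos x)
  -- indicator
  set I : Ω → ℝ := fun ω => if A ω = a then (1 : ℝ) else 0 with hIdef
  have hsa : MeasurableSet {ω | A ω = a} := hA (measurableSet_singleton a)
  have hImeas : Measurable I := Measurable.ite hsa measurable_const measurable_const
  have hIbdd : ∀ ω, ‖I ω‖ ≤ 1 := by
    intro ω; by_cases h : A ω = a <;> simp [hIdef, h]
  -- basic integrabilities
  have hYint : Integrable Y P := hY.integrable one_le_two
  have hmhati : Integrable (fun ω => mhat (X ω)) P := hmhatL2.integrable one_le_two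
  have hmti : Integrable (fun ω => mt (X ω)) P := hmtL2.integrable one_le_two
  have hIY : Integrable (fun ω => I ω * Y ω) P :=
    hYint.bdd_mul (c := 1) hImeas.aestronglyMeasurable (Filter.Eventually.of_forall hIbdd)
  have hIint : Integrable I P :=
    (integrable_const (1:ℝ)).bdd_mul (c := 1) hImeas.aestronglyMeasurable
      (Filter.Eventually.of_forall hIbdd) |>.congr (Filter.Eventually.of_forall (by simp))
  -- measurable pieces
  have hmes_h : StronglyMeasurable[MeasurableSpace.comap X inferInstance] (fun ω => (phat (X ω))⁻¹) :=
    ((hphatm.comp hXm).inv).stronglyMeasurable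
  have hmes_f2 : StronglyMeasurable[MeasurableSpace.comap X inferInstance] (fun ω => mhat (X ω) * (phat (X ω))⁻¹) :=
    ((hmhatm.comp hXm).mul ((hphatm.comp hXm).inv)).stronglyMeasurable
  have hmeas_T1 : AEStronglyMeasurable (fun ω => (phat (X ω))⁻¹ * (I ω * Y ω)) P :=
    (((hphatm.comp hX).inv).mul (hImeas.mul hYm)).aestronglyMeasurable
  -- T1 and T2 integrable
  have hT1 : Integrable (fun ω => (phat (X ω))⁻¹ * (I ω * Y ω)) P := by
    refine hIY.bdd_mul ((hphatm.comp hX).inv).aestronglyMeasurable (c := ε⁻¹) (Filter.Eventually.of_forall fun ω => ?_)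
    rw [Real.norm_eq_abs, abs_of_pos (hinvpos _)]; exact hinvle _
  have hT2 : Integrable (fun ω => mhat (X ω) * (phat (X ω))⁻¹ * I ω) P := by
    refine Integrable.mono' (g := fun ω => ε⁻¹ * |mhat (X ω)|)
      ((hmhati.abs.const_mul _)) (((hmhatm.comp hX).mul ((hphatm.comp hX).inv)).mul
        hImeas).aestronglyMeasurable (Filter.Eventually.of_forall fun ω => ?_)
    rw [Real.norm_eq_abs, abs_mul, abs_mul, abs_of_pos (hinvpos _)]
    have hI1 : |I ω| ≤ 1 := by simpa [Real.norm_eq_abs] using hIbdd ω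
    calc |mhat (X ω)| * (phat (X ω))⁻¹ * |I ω|
        ≤ |mhat (X ω)| * (phat (X ω))⁻¹ * 1 :=
          mul_le_mul_of_nonneg_left hI1 (mul_nonneg (abs_nonneg _) (hinvpos _).le)
      _ = (phat (X ω))⁻¹ * |mhat (X ω)| := by ring
      _ ≤ ε⁻¹ * |mhat (X ω)| := mul_le_mul_of_nonneg_right (hinvle _) (abs_nonneg _)
  -- products of L2 functions
  have hmtpt : Integrable (fun ω => mt (X ω) * pt (X ω)) P := mulL2_int hmtL2 hptL2
  have hmhpt : Integrable (fun ω => mhat (X ω) * pt (X ω)) P := mulL2_int hmhatL2 hptL2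
  have hf1 : Integrable (fun ω => (phat (X ω))⁻¹ * (mt (X ω) * pt (X ω))) P := by
    refine hmtpt.bdd_mul ((hphatm.comp hX).inv).aestronglyMeasurable (c := ε⁻¹) (Filter.Eventually.of_forall fun ω => ?_)
    rw [Real.norm_eq_abs, abs_of_pos (hinvpos _)]; exact hinvle _
  have hf2 : Integrable (fun ω => mhat (X ω) * (phat (X ω))⁻¹ * pt (X ω)) P := by
    have : Integrable (fun ω => (phat (X ω))⁻¹ * (mhat (X ω) * pt (X ω))) P := by
      refine hmhpt.bdd_mul ((hphatm.comp hX).inv).aestronglyMeasurable (c := ε⁻¹) (Filter.Eventually.of_forall fun ω => ?_)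
      rw [Real.norm_eq_abs, abs_of_pos (hinvpos _)]; exact hinvle _
    exact this.congr (Filter.Eventually.of_forall fun ω => by ring)
  -- tower for T1
  have hTow1 : ∫ ω, (phat (X ω))⁻¹ * (I ω * Y ω) ∂P
      = ∫ ω, (phat (X ω))⁻¹ * (mt (X ω) * pt (X ω)) ∂P := by
    have := tower_aux P hm (fun ω => (phat (X ω))⁻¹) (fun ω => I ω * Y ω)
      hmes_h (by exact hT1) hIY
    rw [this]
    refine integral_congr_ae ?_
    filter_upwards [hmt] with ω hω
    rw [← hω]
  -- tower for T2
  have hTow2 : ∫ ω, mhat (X ω) * (phat (X ω))⁻¹ * I ω ∂P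
      = ∫ ω, mhat (X ω) * (phat (X ω))⁻¹ * pt (X ω) ∂P := by
    have := tower_aux P hm (fun ω => mhat (X ω) * (phat (X ω))⁻¹) I
      hmes_f2 (by exact hT2) hIint
    rw [this]
    refine integral_congr_ae ?_
    filter_upwards [hpt] with ω hω
    rw [← hω]
  -- split LHS integral
  have hsub12 : Integrable (fun ω => (phat (X ω))⁻¹ * (I ω * Y ω)
      - mhat (X ω) * (phat (X ω))⁻¹ * I ω) P := hT1.sub hT2
  have hLHS : ∫ ω, (I ω * (Y ω - mhat (X ω)) / phat (X ω) + mhat (X ω)) ∂P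
      = (∫ ω, (phat (X ω))⁻¹ * (I ω * Y ω) ∂P)
        - (∫ ω, mhat (X ω) * (phat (X ω))⁻¹ * I ω ∂P)
        + ∫ ω, mhat (X ω) ∂P := by
    rw [← integral_sub hT1 hT2, ← integral_add hsub12 hmhati]
    refine integral_congr_ae (Filter.Eventually.of_forall fun ω => ?_)
    simp only [div_eq_mul_inv]
    ring
  -- identify RHS integrand
  have hRHSeq : ∀ ω, ((pt (X ω) - phat (X ω)) / phat (X ω)) * (mt (X ω) - mhat (X ω))
      = (phat (X ω))⁻¹ * (mt (X ω) * pt (X ω))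
        - mhat (X ω) * (phat (X ω))⁻¹ * pt (X ω)
        + mhat (X ω) - mt (X ω) := by
    intro ω
    have h1 : phat (X ω) * (phat (X ω))⁻¹ = 1 := mul_inv_cancel₀ (hphatpos (X ω)).ne'
    rw [div_eq_mul_inv]
    linear_combination (mhat (X ω) - mt (X ω)) * h1
  have hRHS : ∫ ω, ((pt (X ω) - phat (X ω)) / phat (X ω)) * (mt (X ω) - mhat (X ω)) ∂P
      = (∫ ω, (phat (X ω))⁻¹ * (mt (X ω) * pt (X ω)) ∂P)
        - (∫ ω, mhat (X ω) * (phat (X ω))⁻¹ * pt (X ω) ∂P)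
        + (∫ ω, mhat (X ω) ∂P) - ∫ ω, mt (X ω) ∂P := by
    have hsubf : Integrable (fun ω => (phat (X ω))⁻¹ * (mt (X ω) * pt (X ω))
        - mhat (X ω) * (phat (X ω))⁻¹ * pt (X ω)) P := hf1.sub hf2
    have haddf : Integrable (fun ω => (phat (X ω))⁻¹ * (mt (X ω) * pt (X ω))
        - mhat (X ω) * (phat (X ω))⁻¹ * pt (X ω) + mhat (X ω)) P := hsubf.add hmhati
    rw [← integral_sub hf1 hf2, ← integral_add hsubf hmhati, ← integral_sub haddf hmti]
    exact integral_congr_ae (Filter.Eventually.of_forall fun ω => hRHSeq ω)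
  have part1 : (∫ ω, (I ω * (Y ω - mhat (X ω)) / phat (X ω) + mhat (X ω)) ∂P)
      - ∫ ω, mt (X ω) ∂P
      = ∫ ω, ((pt (X ω) - phat (X ω)) / phat (X ω)) * (mt (X ω) - mhat (X ω)) ∂P := by
    rw [hLHS, hTow1, hTow2, hRHS]
  refine ⟨part1, ?_⟩
  rw [part1]
  -- second part: Cauchy-Schwarz
  set u : Ω → ℝ := fun ω => phat (X ω) - pt (X ω) with hudef
  set v : Ω → ℝ := fun ω => mhat (X ω) - mt (X ω) with hvdef
  have huL2 : MemLp u 2 P := hphatL2.sub hptL2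
  have hvL2 : MemLp v 2 P := hmhatL2.sub hmtL2
  have huv : Integrable (fun ω => u ω * v ω) P := mulL2_int huL2 hvL2
  have hbig : Integrable (fun ω => ε⁻¹ * (|u ω| * |v ω|)) P := by
    have := huv.abs
    simp only [abs_mul] at this
    exact this.const_mul _
  have hcomb : Integrable (fun ω => (phat (X ω))⁻¹ * (mt (X ω) * pt (X ω))
      - mhat (X ω) * (phat (X ω))⁻¹ * pt (X ω) + mhat (X ω) - mt (X ω)) P :=
    ((hf1.sub hf2).add hmhati).sub hmti
  have hrint : Integrable
      (fun ω => ((pt (X ω) - phat (X ω)) / phat (X ω)) * (mt (X ω) - mhat (X ω))) P :=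
    hcomb.congr (Filter.Eventually.of_forall fun ω => (hRHSeq ω).symm)
  have hptbd : ∀ ω, |((pt (X ω) - phat (X ω)) / phat (X ω)) * (mt (X ω) - mhat (X ω))|
      ≤ ε⁻¹ * (|u ω| * |v ω|) := by
    intro ω
    rw [div_eq_mul_inv, abs_mul, abs_mul, abs_inv, abs_of_pos (hphatpos _)]
    have h1 : |pt (X ω) - phat (X ω)| = |u ω| := by rw [hudef]; exact abs_sub_comm _ _
    have h2 : |mt (X ω) - mhat (X ω)| = |v ω| := by rw [hvdef]; exact abs_sub_comm _ _
    rw [h1, h2]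
    calc |u ω| * (phat (X ω))⁻¹ * |v ω| = (|u ω| * |v ω|) * (phat (X ω))⁻¹ := by ring
      _ ≤ (|u ω| * |v ω|) * ε⁻¹ :=
          mul_le_mul_of_nonneg_left (hinvle _) (by positivity)
      _ = ε⁻¹ * (|u ω| * |v ω|) := by ring
  have step1 : |∫ ω, ((pt (X ω) - phat (X ω)) / phat (X ω)) * (mt (X ω) - mhat (X ω)) ∂P|
      ≤ ∫ ω, ε⁻¹ * (|u ω| * |v ω|) ∂P := by
    calc |∫ ω, ((pt (X ω) - phat (X ω)) / phat (X ω)) * (mt (X ω) - mhat (X ω)) ∂P|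
        ≤ ∫ ω, |((pt (X ω) - phat (X ω)) / phat (X ω)) * (mt (X ω) - mhat (X ω))| ∂P := by
          have h := norm_integral_le_integral_norm (μ := P)
              (fun ω => ((pt (X ω) - phat (X ω)) / phat (X ω)) * (mt (X ω) - mhat (X ω)))
          simp only [Real.norm_eq_abs] at h
          exact h
      _ ≤ ∫ ω, ε⁻¹ * (|u ω| * |v ω|) ∂P :=
          integral_mono hrint.abs hbig hptbd
  have hCS : ∫ ω, |u ω| * |v ω| ∂P
      ≤ Real.sqrt (∫ ω, u ω ^ 2 ∂P) * Real.sqrt (∫ ω, v ω ^ 2 ∂P) := by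
    have hpq : Real.HolderConjugate 2 2 := (Real.holderConjugate_iff_eq_conjExponent one_lt_two).mpr (by norm_num)
    have hof : ENNReal.ofReal (2:ℝ) = 2 := by norm_num
    have := integral_mul_norm_le_Lp_mul_Lq (μ := P) hpq
      (by rw [hof]; exact huL2) (by rw [hof]; exact hvL2)
    have hnorm2 : ∀ (f : Ω → ℝ), (fun ω => ‖f ω‖ ^ (2:ℝ)) = fun ω => f ω ^ 2 := by
      intro f; funext ω
      rw [Real.norm_eq_abs, show (2:ℝ) = ((2:ℕ):ℝ) by norm_num, Real.rpow_natCast, sq_abs]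
    simp only [Real.norm_eq_abs] at this
    calc ∫ ω, |u ω| * |v ω| ∂P
        ≤ (∫ ω, |u ω| ^ (2:ℝ) ∂P) ^ ((1:ℝ)/2) * (∫ ω, |v ω| ^ (2:ℝ) ∂P) ^ ((1:ℝ)/2) := this
      _ = Real.sqrt (∫ ω, u ω ^ 2 ∂P) * Real.sqrt (∫ ω, v ω ^ 2 ∂P) := by
          rw [Real.sqrt_eq_rpow, Real.sqrt_eq_rpow]
          congr 1
          · congr 1
            refine integral_congr_ae (Filter.Eventually.of_forall fun ω => ?_)
            show |u ω| ^ (2:ℝ) = u ω ^ 2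
            rw [Real.rpow_two, sq_abs]
          · congr 1
            refine integral_congr_ae (Filter.Eventually.of_forall fun ω => ?_)
            show |v ω| ^ (2:ℝ) = v ω ^ 2
            rw [Real.rpow_two, sq_abs]
  calc |∫ ω, ((pt (X ω) - phat (X ω)) / phat (X ω)) * (mt (X ω) - mhat (X ω)) ∂P|
      ≤ ∫ ω, ε⁻¹ * (|u ω| * |v ω|) ∂P := step1
    _ = ε⁻¹ * ∫ ω, |u ω| * |v ω| ∂P := integral_const_mul _ _
    _ ≤ ε⁻¹ * (Real.sqrt (∫ ω, u ω ^ 2 ∂P) * Real.sqrt (∫ ω, v ω ^ 2 ∂P)) :=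
        mul_le_mul_of_nonneg_left hCS (inv_nonneg.mpr hε.le)
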